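/- Let c > 0. For each r > 2c, let β^N(r) be the unique β ∈ (0,1) with β·log(β·r/(2c)) = 1 − β, and let β^NN(r) be the unique β ∈ (0,1) with β·log(β·r/c) = 1 − β. Then: (i) β^N(r) > β^NN(r) for every r > 2c; (ii) the map r ↦ β^N(r) is strictly decreasing on (2c, ∞); and (iii) it follows that the dominant CP's surplus is strictly lower in the neutral regime: (1−β^N(r))²·r/β^N(r) < (1−β^NN(r))²·r/β^NN(r). -/
import Mathlib

/-- `F β = (1-β)/β - log β` is strictly decreasing on `(0,1]`. -/
lemma F_anti {a b : ℝ} (ha : 0 < a) (hab : a < b) (hb : b ≤ 1) :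
    (1 - b) / b - Real.log b < (1 - a) / a - Real.log a := by
  have hb0 : 0 < b := ha.trans hab
  have h1 : (1 - b) / b < (1 - a) / a := by
    rw [div_lt_div_iff₀ hb0 ha]; nlinarith
  have h2 : Real.log a < Real.log b := Real.log_lt_log ha hab
  linarith

/-- From the defining equation, extract the `F` value. -/
lemma F_val {β k : ℝ} (hβ0 : 0 < β) (hk : 0 < k)
    (heq : β * Real.log (β * k) = 1 - β) :
    (1 - β) / β - Real.log β = Real.log k := by
  have hlog : Real.log (β * k) = Real.log β + Real.log k :=
    Real.log_mul hβ0.ne' hk.ne'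
  have : Real.log (β * k) = (1 - β) / β := by
    field_simp at heq ⊢
    linarith [heq]
  rw [hlog] at this
  linarith

/-- Reflect strict anti-monotonicity. -/
lemma F_anti_reflect {a b : ℝ} (ha0 : 0 < a) (ha1 : a ≤ 1) (hb0 : 0 < b) (hb1 : b ≤ 1)
    (h : (1 - b) / b - Real.log b < (1 - a) / a - Real.log a) : a < b := by
  rcases lt_trichotomy a b with h' | h' | h'
  · exact h'
  · subst h'; exact absurd h (lt_irrefl _)
  · exact absurd (F_anti hb0 h' ha1) (by linarith)

/-- For `c > 0` and `r > 2c`: (i) the neutral dominant-CP share `β^N(r)` exceeds the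
non-neutral share `β^NN(r)`; (ii) `β^N` is strictly decreasing on `(2c, ∞)`; and (iii)
the dominant CP's surplus is strictly lower in the neutral regime. -/
theorem stmt_19 (c : ℝ) (hc : 0 < c) (βN βNN : ℝ → ℝ)
    (hmemN : ∀ r, 2 * c < r → βN r ∈ Set.Ioo (0 : ℝ) 1)
    (heqN : ∀ r, 2 * c < r → βN r * Real.log (βN r * r / (2 * c)) = 1 - βN r)
    (hmemNN : ∀ r, 2 * c < r → βNN r ∈ Set.Ioo (0 : ℝ) 1)
    (heqNN : ∀ r, 2 * c < r → βNN r * Real.log (βNN r * r / c) = 1 - βNN r) :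
    (∀ r, 2 * c < r → βNN r < βN r) ∧
    (∀ r s, 2 * c < r → r < s → βN s < βN r) ∧
    (∀ r, 2 * c < r →
      (1 - βN r) ^ 2 * r / βN r < (1 - βNN r) ^ 2 * r / βNN r) := by
  have hFN : ∀ r, 2 * c < r →
      (1 - βN r) / βN r - Real.log (βN r) = Real.log (r / (2 * c)) := by
    intro r hr
    obtain ⟨h0, h1⟩ := hmemN r hr
    have hk : 0 < r / (2 * c) := div_pos (by linarith) (by linarith)
    have heq := heqN r hr
    have : βN r * r / (2 * c) = βN r * (r / (2 * c)) := by ring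
    rw [this] at heq
    exact F_val h0 hk heq
  have hFNN : ∀ r, 2 * c < r →
      (1 - βNN r) / βNN r - Real.log (βNN r) = Real.log (r / c) := by
    intro r hr
    obtain ⟨h0, h1⟩ := hmemNN r hr
    have hk : 0 < r / c := div_pos (by linarith) hc
    have heq := heqNN r hr
    have : βNN r * r / c = βNN r * (r / c) := by ring
    rw [this] at heq
    exact F_val h0 hk heq
  have main : ∀ r, 2 * c < r → βNN r < βN r := by
    intro r hr
    obtain ⟨hN0, hN1⟩ := hmemN r hr
    obtain ⟨hNN0, hNN1⟩ := hmemNN r hr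
    have hlog : Real.log (r / (2 * c)) < Real.log (r / c) := by
      apply Real.log_lt_log (div_pos (by linarith) (by linarith))
      rw [div_lt_div_iff₀ (by linarith) hc]; nlinarith
    exact F_anti_reflect hNN0 hNN1.le hN0 hN1.le
      (by rw [hFN r hr, hFNN r hr]; exact hlog)
  refine ⟨main, ?_, ?_⟩
  · intro r s hr hrs
    have hs : 2 * c < s := hr.trans hrs
    obtain ⟨hr0, hr1⟩ := hmemN r hr
    obtain ⟨hs0, hs1⟩ := hmemN s hs
    have hlog : Real.log (r / (2 * c)) < Real.log (s / (2 * c)) := by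
      apply Real.log_lt_log (div_pos (by linarith) (by linarith))
      rw [div_lt_div_iff₀ (by linarith) (by linarith)]; nlinarith
    exact F_anti_reflect hs0 hs1.le hr0 hr1.le
      (by rw [hFN r hr, hFN s hs]; exact hlog)
  · intro r hr
    obtain ⟨hN0, hN1⟩ := hmemN r hr
    obtain ⟨hNN0, hNN1⟩ := hmemNN r hr
    have hab := main r hr
    have hr0 : 0 < r := by linarith
    rw [div_lt_div_iff₀ hN0 hNN0]
    nlinarith [mul_pos (mul_pos hr0 (sub_pos.2 hab)) (sub_pos.2 (show βNN r * βN r < 1 by nlinarith))]
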